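/- Let n ≥ 1, let R₀ ∈ SO(n) and let Z ∈ so(n). If the matrix I − ZᵀZ is positive definite, then C(Z) := √(I − ZᵀZ) − I is symmetric and R₀(I + Z + C(Z)) ∈ SO(n); that is, (I + Z + C(Z))ᵀ(I + Z + C(Z)) = I and det(R₀(I + Z + C(Z))) = 1. -/

import Mathlib

open Matrix

open scoped ComplexOrder in
/-- The positive semidefinite square root of a positive semidefinite matrix
(the definition `Matrix.PosSemidef.sqrt` of the older Mathlib, since removed). -/
noncomputable def Matrix.PosSemidef.sqrt {n : Type*} [Fintype n] [DecidableEq n] {𝕜 : Type*} [RCLike 𝕜]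
    {A : Matrix n n 𝕜} (hA : A.PosSemidef) : Matrix n n 𝕜 :=
  hA.1.eigenvectorUnitary.1 * diagonal ((↑) ∘ (√·) ∘ hA.1.eigenvalues) *
  (star hA.1.eigenvectorUnitary : Matrix n n 𝕜)

open scoped ComplexOrder in
lemma Matrix.PosSemidef.posSemidef_sqrt {n : Type*} [Fintype n] [DecidableEq n] {𝕜 : Type*}
    [RCLike 𝕜] {A : Matrix n n 𝕜} (hA : A.PosSemidef) : hA.sqrt.PosSemidef := by
  unfold Matrix.PosSemidef.sqrt
  rw [Unitary.isUnit_coe.posSemidef_star_right_conjugate_iff, posSemidef_diagonal_iff]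
  intro i
  simp [Real.sqrt_nonneg]

open scoped ComplexOrder in
lemma Matrix.PosSemidef.sqrt_mul_self {n : Type*} [Fintype n] [DecidableEq n] {𝕜 : Type*}
    [RCLike 𝕜] {A : Matrix n n 𝕜} (hA : A.PosSemidef) : hA.sqrt * hA.sqrt = A := by
  unfold Matrix.PosSemidef.sqrt
  conv_rhs => rw [hA.1.spectral_theorem, Unitary.conjStarAlgAut_apply]
  have hU : (star hA.1.eigenvectorUnitary : Matrix n n 𝕜) * hA.1.eigenvectorUnitary.1 = 1 :=
    Unitary.coe_star_mul_self _
  have e : ∀ P Q U V : Matrix n n 𝕜, V * U = 1 → U * P * V * (U * Q * V) = U * (P * Q) * V := by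
    intro P Q U V h
    calc U * P * V * (U * Q * V) = U * P * (V * U) * Q * V := by simp only [mul_assoc]
      _ = U * (P * Q) * V := by rw [h, mul_one]; simp only [mul_assoc]
  rw [e _ _ _ _ hU, diagonal_mul_diagonal]
  congr 2
  congr 1
  funext i
  simp only [Function.comp_apply]
  rw [← RCLike.ofReal_mul, Real.mul_self_sqrt (hA.eigenvalues_nonneg i)]

private lemma conjT_eq_transpose {n : ℕ} (M : Matrix (Fin n) (Fin n) ℝ) : Mᴴ = Mᵀ := by
  ext i j; simp [conjTranspose_apply]

/-- For `R₀ ∈ SO(n)` and skew-symmetric `Z` with `I - ZᵀZ` positive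
definite, the adjustment `C(Z) = √(I - ZᵀZ) - I` is symmetric and
`R₀ (I + Z + C(Z)) ∈ SO(n)`. -/
theorem stmt0 {n : ℕ} (hn : 1 ≤ n) (R₀ Z : Matrix (Fin n) (Fin n) ℝ)
    (hR₀orth : R₀ᵀ * R₀ = 1) (hR₀det : R₀.det = 1)
    (hZ : Zᵀ = -Z)
    (hpd : (1 - Zᵀ * Z).PosDef) :
    (hpd.posSemidef.sqrt - 1)ᵀ = hpd.posSemidef.sqrt - 1 ∧
    (1 + Z + (hpd.posSemidef.sqrt - 1))ᵀ * (1 + Z + (hpd.posSemidef.sqrt - 1)) = 1 ∧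
    (R₀ * (1 + Z + (hpd.posSemidef.sqrt - 1))).det = 1 := by
  set S := hpd.posSemidef.sqrt with hSdef
  have hSps : S.PosSemidef := hpd.posSemidef.posSemidef_sqrt
  have hSsymm : Sᵀ = S := by rw [← conjT_eq_transpose]; exact hSps.1
  have hSS : S * S = 1 - Zᵀ * Z := hpd.posSemidef.sqrt_mul_self
  have hA' : S * S = 1 + Z * Z := by rw [hSS, hZ]; noncomm_ring
  -- S is positive definite
  have hSpd : S.PosDef := by
    refine posDef_iff_dotProduct_mulVec.mpr ⟨hSps.1, fun x hx => ?_⟩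
    rcases lt_or_eq_of_le ((posSemidef_iff_dotProduct_mulVec.mp hSps).2 x) with h | h
    · exact h
    · exfalso
      have h0 : S *ᵥ x = 0 := (hSps.dotProduct_mulVec_zero_iff x).mp h.symm
      have h1 : (1 - Zᵀ * Z) *ᵥ x = 0 := by
        rw [← hSS, ← mulVec_mulVec, h0, mulVec_zero]
      have h2 := (posDef_iff_dotProduct_mulVec.mp hpd).2 hx
      rw [h1, dotProduct_zero] at h2
      exact lt_irrefl 0 h2
  -- positivity of the quadratic form of S, over ℝ
  have hSq : ∀ v : Fin n → ℝ, v ≠ 0 → 0 < v ⬝ᵥ S *ᵥ v := by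
    intro v hv
    have := (posDef_iff_dotProduct_mulVec.mp hSpd).2 hv
    simpa using this
  -- S commutes with Z
  have hSZ : S * Z = Z * S := by
    by_contra hne
    set W := S * Z - Z * S with hW
    have hWne : W ≠ 0 := sub_ne_zero.mpr hne
    have hWsymm : Wᵀ = W := by
      rw [hW, transpose_sub, transpose_mul, transpose_mul, hSsymm, hZ]
      noncomm_ring
    have hWherm : W.IsHermitian := by
      show Wᴴ = W
      rw [conjT_eq_transpose, hWsymm]
    have hcomm : S * S * Z = Z * (S * S) := by rw [hA']; noncomm_ring
    have hSW : S * W + W * S = 0 := by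
      have e : S * W + W * S = S * S * Z - Z * (S * S) := by rw [hW]; noncomm_ring
      rw [e, hcomm, sub_self]
    obtain ⟨v, t, ht, hv, hv'⟩ := hWherm.exists_eigenvector_of_ne_zero hWne
    have hv'' : W *ᵥ v = t • v := by simpa using hv'
    have key : v ⬝ᵥ (S * W + W * S) *ᵥ v = 2 * t * (v ⬝ᵥ S *ᵥ v) := by
      rw [add_mulVec, dotProduct_add, ← mulVec_mulVec, ← mulVec_mulVec, hv'',
        mulVec_smul, dotProduct_smul]
      have e2 : v ⬝ᵥ W *ᵥ (S *ᵥ v) = (W *ᵥ v) ⬝ᵥ (S *ᵥ v) := by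
        rw [dotProduct_mulVec, ← mulVec_transpose, hWsymm]
      rw [e2, hv'', smul_dotProduct]
      simp [smul_eq_mul]
      ring
    rw [hSW, zero_mulVec, dotProduct_zero] at key
    have hpos := hSq v hv
    have : 2 * t * (v ⬝ᵥ S *ᵥ v) ≠ 0 := by
      apply mul_ne_zero (by simpa using ht) (ne_of_gt hpos)
    exact this key.symm
  -- the matrix M = S + Z
  have hM : 1 + Z + (S - 1) = S + Z := by abel
  -- orthogonality
  have horth : (S + Z)ᵀ * (S + Z) = 1 := by
    rw [transpose_add, hSsymm, hZ]
    have e : (S + -Z) * (S + Z) = S * S - Z * Z + (S * Z - Z * S) := by noncomm_ring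
    rw [e, hSZ, sub_self, add_zero, hA']
    noncomm_ring
  -- skew form vanishes
  have hskew : ∀ v : Fin n → ℝ, v ⬝ᵥ Z *ᵥ v = 0 := by
    intro v
    have e : v ⬝ᵥ Z *ᵥ v = -(v ⬝ᵥ Z *ᵥ v) := by
      conv_lhs => rw [dotProduct_mulVec, ← mulVec_transpose, hZ, neg_mulVec,
        neg_dotProduct, dotProduct_comm]
    linarith
  -- determinant of S + Z is 1
  have hdet2 : (S + Z).det * (S + Z).det = 1 := by
    have := congrArg Matrix.det horth
    rwa [det_mul, det_transpose, det_one] at this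
  have hdet1 : (S + Z).det = 1 := by
    rcases mul_self_eq_one_iff.mp hdet2 with h | h
    · exact h
    · exfalso
      have hdetsum : ((S + Z) + 1).det = 0 := by
        have e : (S + Z)ᵀ * ((S + Z) + 1) = ((S + Z) + 1)ᵀ := by
          rw [mul_add, horth, mul_one, transpose_add (S + Z) 1, transpose_one, add_comm]
        have := congrArg Matrix.det e
        rw [det_mul, det_transpose, det_transpose, h] at this
        linarith
      obtain ⟨v, hv, hv'⟩ := (Matrix.exists_mulVec_eq_zero_iff).mpr hdetsum
      have hMv : (S + Z) *ᵥ v = -v := by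
        have : (S + Z) *ᵥ v + v = 0 := by
          rw [add_mulVec, one_mulVec] at hv'
          simpa [add_comm] using hv'
        exact eq_neg_of_add_eq_zero_left this
      have hq : v ⬝ᵥ (S + Z) *ᵥ v = -(v ⬝ᵥ v) := by
        rw [hMv, dotProduct_neg]
      have hq2 : v ⬝ᵥ (S + Z) *ᵥ v = v ⬝ᵥ S *ᵥ v := by
        rw [add_mulVec, dotProduct_add, hskew v, add_zero]
      have hpos := hSq v hv
      have hvv : 0 < v ⬝ᵥ v := by
        have h1 : (0:ℝ) ≤ v ⬝ᵥ v := by simpa using dotProduct_star_self_nonneg v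
        rcases lt_or_eq_of_le h1 with h2 | h2
        · exact h2
        · exfalso; exact hv (by simpa using (dotProduct_self_eq_zero (v := v)).mp h2.symm)
      rw [hq2] at hq
      linarith
  refine ⟨by rw [transpose_sub, hSsymm, transpose_one], ?_, ?_⟩
  · rw [hM, horth]
  · rw [det_mul, hM, hdet1, hR₀det, one_mul]
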